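/- (Lemma 2) Let B ≥ 1 and let O be a duplicate-free list of products with |O| ≤ B that maximizes f among all duplicate-free lists of length at most B, and assume f(O) > 0. Then for every ρ ∈ [0,1] there exists a nonempty duplicate-free list R with |R| ≤ B such that every position t of R has reachability Θ_t = Π_{j<t} θ_{r_j} ≥ ρ, and the MNL expected revenue of its underlying set ℛ satisfies g(ℛ) ≥ (1 − ρ) f(O). -/

import Mathlib

/-- MNL expected revenue of a finite set `S` of products, where product `i`
has revenue `α i` and preference weight `β i`. -/
noncomputable def g (α β : ℕ → ℝ) (S : Finset ℕ) : ℝ :=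
  (∑ i ∈ S, α i * β i) / ((∑ i ∈ S, β i) + 1)

/-- Reachability of (0-based) position `t` of the sequence `S` under the
cascade browse model: the product of the continuation probabilities of all
earlier products. -/
noncomputable def reach (θ : ℕ → ℝ) (S : List ℕ) (t : ℕ) : ℝ :=
  ∏ j ∈ Finset.range t, θ (S.getD j 0)

/-- Expected revenue of a sequence of products `S` under the cascade browse
model combined with the MNL choice model. -/
noncomputable def f (α β θ : ℕ → ℝ) (S : List ℕ) : ℝ :=
  (∑ t ∈ Finset.range (S.length - 1),
      reach θ S t * (1 - θ (S.getD t 0)) * g α β (S.take (t + 1)).toFinset)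
    + reach θ S (S.length - 1) * g α β S.toFinset

section Aux

lemma g_nonneg (α β : ℕ → ℝ) (hα : ∀ i, 0 ≤ α i) (hβ : ∀ i, 0 ≤ β i) (S : Finset ℕ) :
    0 ≤ g α β S := by
  have h1 : (0:ℝ) ≤ ∑ i ∈ S, α i * β i :=
    Finset.sum_nonneg fun i _ => mul_nonneg (hα i) (hβ i)
  have h2 : (0:ℝ) ≤ ∑ i ∈ S, β i := Finset.sum_nonneg fun i _ => hβ i
  exact div_nonneg h1 (by linarith)

lemma g_subadd (α β : ℕ → ℝ) (hα : ∀ i, 0 ≤ α i) (hβ : ∀ i, 0 ≤ β i)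
    {T S : Finset ℕ} (h : T ⊆ S) :
    g α β S ≤ g α β T + g α β (S \ T) := by
  have eA : ((∑ i ∈ S \ T, α i * β i) + ∑ i ∈ T, α i * β i) = ∑ i ∈ S, α i * β i :=
    Finset.sum_sdiff h
  have eW : ((∑ i ∈ S \ T, β i) + ∑ i ∈ T, β i) = ∑ i ∈ S, β i :=
    Finset.sum_sdiff h
  have hA1 : (0:ℝ) ≤ ∑ i ∈ T, α i * β i :=
    Finset.sum_nonneg fun i _ => mul_nonneg (hα i) (hβ i)
  have hA2 : (0:ℝ) ≤ ∑ i ∈ S \ T, α i * β i :=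
    Finset.sum_nonneg fun i _ => mul_nonneg (hα i) (hβ i)
  have hW1 : (0:ℝ) ≤ ∑ i ∈ T, β i := Finset.sum_nonneg fun i _ => hβ i
  have hW2 : (0:ℝ) ≤ ∑ i ∈ S \ T, β i := Finset.sum_nonneg fun i _ => hβ i
  unfold g
  rw [← eA, ← eW, add_div]
  have b1 : (∑ i ∈ S \ T, α i * β i) / ((∑ i ∈ S \ T, β i) + (∑ i ∈ T, β i) + 1)
      ≤ (∑ i ∈ S \ T, α i * β i) / ((∑ i ∈ S \ T, β i) + 1) := by
    gcongr
    all_goals linarith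
  have b2 : (∑ i ∈ T, α i * β i) / ((∑ i ∈ S \ T, β i) + (∑ i ∈ T, β i) + 1)
      ≤ (∑ i ∈ T, α i * β i) / ((∑ i ∈ T, β i) + 1) := by
    gcongr
    all_goals linarith
  linarith

lemma reach_zero (θ : ℕ → ℝ) (S : List ℕ) : reach θ S 0 = 1 := by
  simp [reach]

lemma reach_succ (θ : ℕ → ℝ) (S : List ℕ) (t : ℕ) :
    reach θ S (t + 1) = reach θ S t * θ (S.getD t 0) :=
  Finset.prod_range_succ _ _

lemma reach_nonneg (θ : ℕ → ℝ) (hθ : ∀ i, 0 ≤ θ i ∧ θ i ≤ 1) (S : List ℕ) (t : ℕ) :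
    0 ≤ reach θ S t :=
  Finset.prod_nonneg fun j _ => (hθ _).1

lemma reach_add (θ : ℕ → ℝ) (S : List ℕ) (m n : ℕ) :
    reach θ S (m + n) = reach θ S m * ∏ j ∈ Finset.range n, θ (S.getD (m + j) 0) :=
  Finset.prod_range_add _ m n

lemma reach_anti (θ : ℕ → ℝ) (hθ : ∀ i, 0 ≤ θ i ∧ θ i ≤ 1) (S : List ℕ)
    {m n : ℕ} (h : m ≤ n) : reach θ S n ≤ reach θ S m := by
  obtain ⟨p, rfl⟩ := Nat.exists_eq_add_of_le h
  rw [reach_add]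
  have h1 : (∏ j ∈ Finset.range p, θ (S.getD (m + j) 0)) ≤ 1 :=
    Finset.prod_le_one (fun j _ => (hθ _).1) (fun j _ => (hθ _).2)
  have h0 : (0:ℝ) ≤ ∏ j ∈ Finset.range p, θ (S.getD (m + j) 0) :=
    Finset.prod_nonneg fun j _ => (hθ _).1
  nlinarith [reach_nonneg θ hθ S m]

lemma getD_take {l : List ℕ} {m j : ℕ} (h : j < m) : (l.take m).getD j 0 = l.getD j 0 := by
  rw [List.getD_eq_getElem?_getD, List.getD_eq_getElem?_getD, List.getElem?_take_of_lt h]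

lemma getD_drop (l : List ℕ) (m j : ℕ) : (l.drop m).getD j 0 = l.getD (m + j) 0 := by
  rw [List.getD_eq_getElem?_getD, List.getD_eq_getElem?_getD, List.getElem?_drop]

lemma reach_take (θ : ℕ → ℝ) (S : List ℕ) {t m : ℕ} (h : t ≤ m) :
    reach θ (S.take m) t = reach θ S t :=
  Finset.prod_congr rfl fun j hj =>
    by rw [getD_take (lt_of_lt_of_le (Finset.mem_range.mp hj) h)]

lemma reach_drop (θ : ℕ → ℝ) (S : List ℕ) (m t : ℕ) :
    reach θ (S.drop m) t = ∏ j ∈ Finset.range t, θ (S.getD (m + j) 0) :=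
  Finset.prod_congr rfl fun j _ => by rw [getD_drop]

lemma take_toFinset_sdiff {O : List ℕ} (hO : O.Nodup) (τ m : ℕ) :
    ((O.drop τ).take m).toFinset = (O.take (τ + m)).toFinset \ (O.take τ).toFinset := by
  have h1 : (O.take τ ++ O.drop τ).Nodup := by rw [List.take_append_drop]; exact hO
  have h2 := List.disjoint_of_nodup_append h1
  have hdisj : (O.take τ).Disjoint ((O.drop τ).take m) :=
    fun a ha hb => h2 ha (List.take_subset _ _ hb)
  rw [List.take_add, List.toFinset_append]
  exact (Finset.union_sdiff_cancel_left (List.disjoint_toFinset_iff_disjoint.mpr hdisj)).symm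

lemma sum_tele0 (θ : ℕ → ℝ) (O : List ℕ) (n : ℕ) :
    (∑ t ∈ Finset.range n, reach θ O t * (1 - θ (O.getD t 0))) = 1 - reach θ O n := by
  have h : ∀ t, reach θ O t * (1 - θ (O.getD t 0))
      = (fun i => reach θ O i) t - (fun i => reach θ O i) (t+1) := by
    intro t; simp only; rw [reach_succ]; ring
  calc (∑ t ∈ Finset.range n, reach θ O t * (1 - θ (O.getD t 0)))
      = ∑ t ∈ Finset.range n, ((fun i => reach θ O i) t - (fun i => reach θ O i) (t+1)) :=
        Finset.sum_congr rfl fun t _ => h t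
    _ = reach θ O 0 - reach θ O n := Finset.sum_range_sub' _ n
    _ = 1 - reach θ O n := by rw [reach_zero]

lemma sum_teleAdd (θ : ℕ → ℝ) (O : List ℕ) (m n : ℕ) :
    (∑ s ∈ Finset.range n, reach θ O (m + s) * (1 - θ (O.getD (m + s) 0)))
      = reach θ O m - reach θ O (m + n) := by
  have h : ∀ s, reach θ O (m + s) * (1 - θ (O.getD (m + s) 0))
      = (fun i => reach θ O (m + i)) s - (fun i => reach θ O (m + i)) (s+1) := by
    intro s; simp only; rw [show m + (s+1) = (m+s)+1 from rfl, reach_succ]; ring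
  calc (∑ s ∈ Finset.range n, reach θ O (m + s) * (1 - θ (O.getD (m + s) 0)))
      = ∑ s ∈ Finset.range n, ((fun i => reach θ O (m+i)) s - (fun i => reach θ O (m+i)) (s+1)) :=
        Finset.sum_congr rfl fun s _ => h s
    _ = reach θ O (m + 0) - reach θ O (m + n) := Finset.sum_range_sub' _ n
    _ = reach θ O m - reach θ O (m + n) := by rw [Nat.add_zero]

end Aux

/-- Lemma 2: there is a nonempty duplicate-free sequence `R`, all
of whose positions have reachability at least `ρ`, whose underlying set has MNL
revenue at least `(1 - ρ) f(O)`. -/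
theorem stmt6 (α β θ : ℕ → ℝ) (hα : ∀ i, 0 ≤ α i) (hβ : ∀ i, 0 ≤ β i)
    (hθ : ∀ i, 0 ≤ θ i ∧ θ i ≤ 1)
    (B : ℕ) (hB : 1 ≤ B)
    (O : List ℕ) (hO : O.Nodup) (hOB : O.length ≤ B)
    (hopt : ∀ L : List ℕ, L.Nodup → L.length ≤ B → f α β θ L ≤ f α β θ O)
    (hfO : 0 < f α β θ O)
    (ρ : ℝ) (hρ0 : 0 ≤ ρ) (hρ1 : ρ ≤ 1) :
    ∃ R : List ℕ, R ≠ [] ∧ R.Nodup ∧ R.length ≤ B ∧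
      (∀ t < R.length, ρ ≤ reach θ R t) ∧
      (1 - ρ) * f α β θ O ≤ g α β R.toFinset := by
  classical
  have hgn : ∀ S : Finset ℕ, 0 ≤ g α β S := g_nonneg α β hα hβ
  have hOne : O ≠ [] := by
    rintro rfl
    have : f α β θ ([] : List ℕ) = 0 := by simp [f, reach, g]
    rw [this] at hfO
    exact lt_irrefl 0 hfO
  have hk1 : 1 ≤ O.length := by
    cases O with
    | nil => exact absurd rfl hOne
    | cons a l => simp
  have hP1 : ρ ≤ reach θ O (1 - 1) := by
    rw [show (1:ℕ) - 1 = 0 from rfl, reach_zero]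
    exact hρ1
  set τ := Nat.findGreatest (fun c => ρ ≤ reach θ O (c - 1)) O.length with hτdef
  have hτ1 : 1 ≤ τ := Nat.le_findGreatest hk1 hP1
  have hτk : τ ≤ O.length := Nat.findGreatest_le O.length
  have hPτ : ρ ≤ reach θ O (τ - 1) := by
    have h := Nat.findGreatest_spec (P := fun c => ρ ≤ reach θ O (c - 1)) hk1 hP1
    simpa [hτdef] using h
  -- maximizer of g over prefixes of length 1..τ
  obtain ⟨t0, ht0mem, ht0max⟩ :=
    (Finset.Icc 1 τ).exists_max_image (fun m => g α β ((O.take m).toFinset))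
      ⟨1, Finset.mem_Icc.mpr ⟨le_rfl, hτ1⟩⟩
  obtain ⟨ht01, ht0τ⟩ := Finset.mem_Icc.mp ht0mem
  have hGle : ∀ m, 1 ≤ m → m ≤ τ → g α β ((O.take m).toFinset) ≤ g α β ((O.take t0).toFinset) :=
    fun m h1 h2 => ht0max m (Finset.mem_Icc.mpr ⟨h1, h2⟩)
  have hG0 : 0 ≤ g α β ((O.take t0).toFinset) := hgn _
  refine ⟨O.take t0, ?_, (List.take_sublist _ _).nodup hO, ?_, ?_, ?_⟩
  · have hpos : 0 < (O.take t0).length := by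
      rw [List.length_take]
      exact lt_min (by omega) (by omega)
    intro hnil
    rw [hnil] at hpos
    simp at hpos
  · rw [List.length_take]; omega
  · intro t ht
    rw [List.length_take] at ht
    have htlt : t < t0 := lt_of_lt_of_le ht (min_le_left _ _)
    rw [reach_take θ O (le_of_lt htlt)]
    exact le_trans hPτ (reach_anti θ hθ O (by omega))
  · -- main inequality
    have hwnn : ∀ t : ℕ, 0 ≤ reach θ O t * (1 - θ (O.getD t 0)) := fun t =>
      mul_nonneg (reach_nonneg θ hθ O t) (by linarith [(hθ (O.getD t 0)).2])
    by_cases hcase : O.length ≤ τ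
    · -- τ = O.length : whole list qualifies, f O ≤ G
      have hhead : (∑ t ∈ Finset.range (O.length - 1),
            reach θ O t * (1 - θ (O.getD t 0)) * g α β ((O.take (t + 1)).toFinset))
          ≤ (1 - reach θ O (O.length - 1)) * g α β ((O.take t0).toFinset) := by
        calc (∑ t ∈ Finset.range (O.length - 1),
              reach θ O t * (1 - θ (O.getD t 0)) * g α β ((O.take (t + 1)).toFinset))
            ≤ ∑ t ∈ Finset.range (O.length - 1),
              reach θ O t * (1 - θ (O.getD t 0)) * g α β ((O.take t0).toFinset) := by
              refine Finset.sum_le_sum fun t htmem => ?_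
              have htlt := Finset.mem_range.mp htmem
              exact mul_le_mul_of_nonneg_left (hGle (t+1) (by omega) (by omega)) (hwnn t)
          _ = (∑ t ∈ Finset.range (O.length - 1),
                reach θ O t * (1 - θ (O.getD t 0))) * g α β ((O.take t0).toFinset) :=
              (Finset.sum_mul _ _ _).symm
          _ = (1 - reach θ O (O.length - 1)) * g α β ((O.take t0).toFinset) := by
              rw [sum_tele0]
      have hlast : reach θ O (O.length - 1) * g α β O.toFinset
          ≤ reach θ O (O.length - 1) * g α β ((O.take t0).toFinset) := by
        refine mul_le_mul_of_nonneg_left ?_ (reach_nonneg θ hθ O _)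
        have h1 : O.take O.length = O := List.take_length
        calc g α β O.toFinset = g α β ((O.take O.length).toFinset) := by rw [h1]
          _ ≤ g α β ((O.take t0).toFinset) := hGle O.length hk1 hcase
      have hF : f α β θ O ≤ g α β ((O.take t0).toFinset) := by
        unfold f
        nlinarith [hhead, hlast]
      nlinarith [mul_nonneg hρ0 (le_of_lt hfO)]
    · -- τ < O.length
      push_neg at hcase
      have hrρ : reach θ O τ < ρ := by
        have h1 := Nat.findGreatest_is_greatest (Nat.lt_succ_self τ) (by omega :
          τ + 1 ≤ O.length)
        simp only [Nat.succ_sub_one, Nat.add_sub_cancel] at h1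
        exact not_le.mp h1
      set n2 := O.length - 1 - τ with hn2def
      have hsplit : O.length - 1 = τ + n2 := by omega
      -- decomposition of f O
      have e1 : f α β θ O
          = (∑ t ∈ Finset.range τ,
              reach θ O t * (1 - θ (O.getD t 0)) * g α β ((O.take (t + 1)).toFinset))
            + (∑ s ∈ Finset.range n2,
              reach θ O (τ + s) * (1 - θ (O.getD (τ + s) 0))
                * g α β ((O.take (τ + s + 1)).toFinset))
            + reach θ O (τ + n2) * g α β O.toFinset := by
        unfold f
        rw [hsplit, Finset.sum_range_add]
      -- head bound
      have hhead : (∑ t ∈ Finset.range τ,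
            reach θ O t * (1 - θ (O.getD t 0)) * g α β ((O.take (t + 1)).toFinset))
          ≤ (1 - reach θ O τ) * g α β ((O.take t0).toFinset) := by
        calc (∑ t ∈ Finset.range τ,
              reach θ O t * (1 - θ (O.getD t 0)) * g α β ((O.take (t + 1)).toFinset))
            ≤ ∑ t ∈ Finset.range τ,
              reach θ O t * (1 - θ (O.getD t 0)) * g α β ((O.take t0).toFinset) := by
              refine Finset.sum_le_sum fun t htmem => ?_
              have htlt := Finset.mem_range.mp htmem
              exact mul_le_mul_of_nonneg_left (hGle (t+1) (by omega) (by omega)) (hwnn t)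
          _ = (∑ t ∈ Finset.range τ, reach θ O t * (1 - θ (O.getD t 0)))
                * g α β ((O.take t0).toFinset) := (Finset.sum_mul _ _ _).symm
          _ = (1 - reach θ O τ) * g α β ((O.take t0).toFinset) := by rw [sum_tele0]
      -- subadditivity bound for extended prefixes
      have hsub : ∀ m : ℕ, g α β ((O.take (τ + m)).toFinset)
          ≤ g α β ((O.take t0).toFinset) + g α β (((O.drop τ).take m).toFinset) := by
        intro m
        have hTsub : (O.take τ).toFinset ⊆ (O.take (τ + m)).toFinset := by
          rw [List.take_add, List.toFinset_append]
          exact Finset.subset_union_left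
        have h1 := g_subadd α β hα hβ hTsub
        rw [take_toFinset_sdiff hO τ m]
        exact le_trans h1 (add_le_add (hGle τ hτ1 le_rfl) le_rfl)
      -- tail sum bound
      have htail : (∑ s ∈ Finset.range n2,
            reach θ O (τ + s) * (1 - θ (O.getD (τ + s) 0))
              * g α β ((O.take (τ + s + 1)).toFinset))
          ≤ (reach θ O τ - reach θ O (τ + n2)) * g α β ((O.take t0).toFinset)
            + ∑ s ∈ Finset.range n2,
              reach θ O (τ + s) * (1 - θ (O.getD (τ + s) 0))
                * g α β (((O.drop τ).take (s + 1)).toFinset) := by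
        have h2 : ∀ s ∈ Finset.range n2,
            reach θ O (τ + s) * (1 - θ (O.getD (τ + s) 0))
              * g α β ((O.take (τ + s + 1)).toFinset)
            ≤ reach θ O (τ + s) * (1 - θ (O.getD (τ + s) 0)) * g α β ((O.take t0).toFinset)
              + reach θ O (τ + s) * (1 - θ (O.getD (τ + s) 0))
                * g α β (((O.drop τ).take (s + 1)).toFinset) := by
          intro s _
          have h3 := hsub (s + 1)
          have h4 := mul_le_mul_of_nonneg_left h3 (hwnn (τ + s))
          calc reach θ O (τ + s) * (1 - θ (O.getD (τ + s) 0))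
                * g α β ((O.take (τ + s + 1)).toFinset)
              ≤ reach θ O (τ + s) * (1 - θ (O.getD (τ + s) 0))
                * (g α β ((O.take t0).toFinset) + g α β (((O.drop τ).take (s + 1)).toFinset)) :=
                h4
            _ = _ := by ring
        calc (∑ s ∈ Finset.range n2,
              reach θ O (τ + s) * (1 - θ (O.getD (τ + s) 0))
                * g α β ((O.take (τ + s + 1)).toFinset))
            ≤ ∑ s ∈ Finset.range n2,
              (reach θ O (τ + s) * (1 - θ (O.getD (τ + s) 0)) * g α β ((O.take t0).toFinset)
                + reach θ O (τ + s) * (1 - θ (O.getD (τ + s) 0))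
                  * g α β (((O.drop τ).take (s + 1)).toFinset)) := Finset.sum_le_sum h2
          _ = (∑ s ∈ Finset.range n2,
                reach θ O (τ + s) * (1 - θ (O.getD (τ + s) 0))) * g α β ((O.take t0).toFinset)
              + ∑ s ∈ Finset.range n2,
                reach θ O (τ + s) * (1 - θ (O.getD (τ + s) 0))
                  * g α β (((O.drop τ).take (s + 1)).toFinset) := by
              rw [Finset.sum_add_distrib, Finset.sum_mul]
          _ = _ := by rw [sum_teleAdd]
      -- last term bound
      have hlast : reach θ O (τ + n2) * g α β O.toFinset
          ≤ reach θ O (τ + n2) * g α β ((O.take t0).toFinset)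
            + reach θ O (τ + n2) * g α β ((O.drop τ).toFinset) := by
        have e2 : O.take (τ + (O.length - τ)) = O := by
          rw [show τ + (O.length - τ) = O.length from by omega]
          exact List.take_length
        have e3 : (O.drop τ).take (O.length - τ) = O.drop τ := by
          rw [show O.length - τ = (O.drop τ).length from by rw [List.length_drop]]
          exact List.take_length
        have h1 := hsub (O.length - τ)
        rw [e2, e3] at h1
        have h4 := mul_le_mul_of_nonneg_left h1 (reach_nonneg θ hθ O (τ + n2))
        calc reach θ O (τ + n2) * g α β O.toFinset
            ≤ reach θ O (τ + n2)
              * (g α β ((O.take t0).toFinset) + g α β ((O.drop τ).toFinset)) := h4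
          _ = _ := by ring
      -- the drop identity
      have hre : ∀ s : ℕ, reach θ O (τ + s) = reach θ O τ * reach θ (O.drop τ) s := by
        intro s
        rw [reach_add, reach_drop]
      have hgd : ∀ s : ℕ, (O.drop τ).getD s 0 = O.getD (τ + s) 0 := fun s => getD_drop O τ s
      have hdropf : reach θ O τ * f α β θ (O.drop τ)
          = (∑ s ∈ Finset.range n2,
              reach θ O (τ + s) * (1 - θ (O.getD (τ + s) 0))
                * g α β (((O.drop τ).take (s + 1)).toFinset))
            + reach θ O (τ + n2) * g α β (O.drop τ).toFinset := by
        have hlen : (O.drop τ).length - 1 = n2 := by rw [List.length_drop]; omega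
        unfold f
        rw [hlen, mul_add, Finset.mul_sum]
        congr 1
        · refine Finset.sum_congr rfl fun s _ => ?_
          rw [hre s, hgd s]
          ring
        · rw [hre n2]
          ring
      -- optimality applied to the dropped list
      have hoptdrop : f α β θ (O.drop τ) ≤ f α β θ O :=
        hopt (O.drop τ) ((List.drop_sublist _ _).nodup hO)
          (by rw [List.length_drop]; omega)
      have hrτ0 : 0 ≤ reach θ O τ := reach_nonneg θ hθ O τ
      have hmul : reach θ O τ * f α β θ (O.drop τ) ≤ reach θ O τ * f α β θ O :=
        mul_le_mul_of_nonneg_left hoptdrop hrτ0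
      -- assemble
      have hbig : f α β θ O ≤ g α β ((O.take t0).toFinset) + reach θ O τ * f α β θ O := by
        rw [e1]
        nlinarith [hhead, htail, hlast, hdropf, hmul]
      nlinarith [hbig, mul_nonneg (by linarith : (0:ℝ) ≤ ρ - reach θ O τ) (le_of_lt hfO)]
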